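/- Define h : ℝ → ℝ by h(ξ) = |cos ξ| + |sin ξ|. Fix λ > 0. Then for every τ ∈ [0, π/(4λ²)) there is exactly one y ≥ 0 with y · h(2τy²) = λ, and the resulting function τ ↦ y(τ) is continuously differentiable on the open interval (0, π/(4λ²)). -/

import Mathlib

open Real Set

/-- The function `h(ξ) = |cos ξ| + |sin ξ|`. -/
noncomputable def h (ξ : ℝ) : ℝ := |Real.cos ξ| + |Real.sin ξ|

/-- `ψ s = s (1 + sin 2s)`. -/
noncomputable def psiF (s : ℝ) : ℝ := s * (1 + Real.sin (2 * s))

/-- `ψ' s = 1 + sin 2s + 2 s cos 2s`. -/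
noncomputable def psiD (s : ℝ) : ℝ := 1 + Real.sin (2 * s) + 2 * s * Real.cos (2 * s)

lemma hasDerivAt_psiF (s : ℝ) : HasDerivAt psiF (psiD s) s := by
  have h1 : HasDerivAt (fun x : ℝ => 2 * x) 2 s := by
    simpa using (hasDerivAt_id s).const_mul (2 : ℝ)
  have hsin : HasDerivAt (fun x : ℝ => Real.sin (2 * x)) (Real.cos (2 * s) * 2) s :=
    (Real.hasDerivAt_sin (2 * s)).comp s h1
  have := (hasDerivAt_id s).mul ((hasDerivAt_const s (1:ℝ)).add hsin)
  refine this.congr_deriv ?_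
  simp only [id_eq, Pi.add_apply]; unfold psiD; ring

lemma contDiff_psiF : ContDiff ℝ ⊤ psiF := by
  unfold psiF
  exact contDiff_id.mul ((contDiff_const.add (Real.contDiff_sin.comp (contDiff_const.mul contDiff_id))))

lemma hasStrictDerivAt_psiF (s : ℝ) : HasStrictDerivAt psiF (psiD s) s :=
  (contDiff_psiF.contDiffAt).hasStrictDerivAt' (hasDerivAt_psiF s) (by norm_num)

lemma hasDerivAt_psiD (s : ℝ) :
    HasDerivAt psiD (4 * Real.cos (2 * s) - 4 * s * Real.sin (2 * s)) s := by
  have h1 : HasDerivAt (fun x : ℝ => 2 * x) 2 s := by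
    simpa using (hasDerivAt_id s).const_mul (2 : ℝ)
  have hsin : HasDerivAt (fun x : ℝ => Real.sin (2 * x)) (Real.cos (2 * s) * 2) s :=
    (Real.hasDerivAt_sin (2 * s)).comp s h1
  have hcos : HasDerivAt (fun x : ℝ => Real.cos (2 * x)) (-Real.sin (2 * s) * 2) s :=
    (Real.hasDerivAt_cos (2 * s)).comp s h1
  have h2 : HasDerivAt (fun x : ℝ => 2 * x) 2 s := h1
  have := ((hasDerivAt_const s (1:ℝ)).add hsin).add (h2.mul hcos)
  refine this.congr_deriv ?_
  ring

lemma continuous_psiD : Continuous psiD := by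
  unfold psiD; fun_prop

lemma psiD_strictAnti : StrictAntiOn psiD (Icc (π/4) (π/2)) := by
  have hderiv : ∀ x ∈ interior (Icc (π/4) (π/2)),
      deriv psiD x < 0 := by
    rw [interior_Icc]
    intro x hx
    rw [(hasDerivAt_psiD x).deriv]
    have hx1 : π/2 < 2*x := by linarith [hx.1]
    have hx2 : 2*x < π := by linarith [hx.2]
    have hcos : Real.cos (2*x) < 0 :=
      Real.cos_neg_of_pi_div_two_lt_of_lt hx1 (by linarith [Real.pi_pos])
    have hsin : 0 < Real.sin (2*x) := Real.sin_pos_of_pos_of_lt_pi (by linarith [Real.pi_pos]) hx2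
    have hxpos : 0 < x := lt_trans (by positivity) hx.1
    nlinarith
  exact strictAntiOn_of_deriv_neg (convex_Icc _ _) continuous_psiD.continuousOn hderiv

lemma psiD_pi4 : psiD (π/4) = 2 := by
  unfold psiD
  have : 2 * (π/4) = π/2 := by ring
  rw [this, Real.sin_pi_div_two, Real.cos_pi_div_two]
  ring

lemma psiD_pi2 : psiD (π/2) = 1 - π := by
  unfold psiD
  have : 2 * (π/2) = π := by ring
  rw [this, Real.sin_pi, Real.cos_pi]
  ring

lemma exists_sstar : ∃ s ∈ Icc (π/4) (π/2), psiD s = 0 := by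
  have h1 : (π/4 : ℝ) ≤ π/2 := by linarith [Real.pi_pos]
  have := intermediate_value_Icc' h1 continuous_psiD.continuousOn
  have h0 : (0:ℝ) ∈ Icc (psiD (π/2)) (psiD (π/4)) := by
    rw [psiD_pi4, psiD_pi2]
    constructor <;> [linarith [Real.pi_gt_three]; norm_num]
  obtain ⟨s, hs, hseq⟩ := this h0
  exact ⟨s, hs, hseq⟩

/-- The critical point `s*` where `ψ' = 0`. -/
noncomputable def sstar : ℝ := Classical.choose exists_sstar

lemma sstar_spec : sstar ∈ Icc (π/4) (π/2) ∧ psiD sstar = 0 :=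
  Classical.choose_spec exists_sstar

lemma sstar_mem : sstar ∈ Ioo (π/4) (π/2) := by
  obtain ⟨⟨h1, h2⟩, h0⟩ := sstar_spec
  constructor
  · rcases lt_or_eq_of_le h1 with h | h
    · exact h
    · exfalso; rw [← h, psiD_pi4] at h0; norm_num at h0
  · rcases lt_or_eq_of_le h2 with h | h
    · exact h
    · exfalso; rw [h, psiD_pi2] at h0; linarith [Real.pi_gt_three]

lemma psiD_pos {s : ℝ} (h0 : 0 ≤ s) (hlt : s < sstar) : 0 < psiD s := by
  rcases le_or_gt s (π/4) with hle | hgt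
  · have h2s0 : 0 ≤ 2 * s := by linarith
    have h2s1 : 2 * s ≤ π/2 := by linarith
    have hsin : 0 ≤ Real.sin (2*s) :=
      Real.sin_nonneg_of_nonneg_of_le_pi h2s0 (by linarith [Real.pi_pos])
    have hcos : 0 ≤ Real.cos (2*s) :=
      Real.cos_nonneg_of_mem_Icc ⟨by linarith [Real.pi_pos], h2s1⟩
    unfold psiD; nlinarith
  · have h1 : s ∈ Icc (π/4) (π/2) := ⟨le_of_lt hgt, by linarith [sstar_mem.2]⟩
    have h2 : sstar ∈ Icc (π/4) (π/2) := sstar_spec.1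
    have := psiD_strictAnti h1 h2 hlt
    rw [sstar_spec.2] at this
    exact this

lemma psiD_nonpos {s : ℝ} (h1 : sstar ≤ s) (h2 : s ≤ π/2) : psiD s ≤ 0 := by
  rcases eq_or_lt_of_le h1 with h | h
  · rw [← h, sstar_spec.2]
  · have ha : sstar ∈ Icc (π/4) (π/2) := sstar_spec.1
    have hb : s ∈ Icc (π/4) (π/2) := ⟨by linarith [sstar_mem.1], h2⟩
    have := psiD_strictAnti ha hb h
    rw [sstar_spec.2] at this
    exact le_of_lt this

lemma psiF_strictMono : StrictMonoOn psiF (Icc 0 sstar) := by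
  apply strictMonoOn_of_deriv_pos (convex_Icc _ _) contDiff_psiF.continuous.continuousOn
  intro x hx
  rw [interior_Icc] at hx
  rw [(hasDerivAt_psiF x).deriv]
  exact psiD_pos (le_of_lt hx.1) hx.2

lemma psiF_antitone : AntitoneOn psiF (Icc sstar (π/2)) := by
  apply antitoneOn_of_deriv_nonpos (convex_Icc _ _) contDiff_psiF.continuous.continuousOn
    (contDiff_psiF.differentiable (by norm_num)).differentiableOn
  intro x hx
  rw [interior_Icc] at hx
  rw [(hasDerivAt_psiF x).deriv]
  exact psiD_nonpos (le_of_lt hx.1) (le_of_lt hx.2)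

lemma psiF_pi2 : psiF (π/2) = π/2 := by
  unfold psiF
  have : 2 * (π/2) = π := by ring
  rw [this, Real.sin_pi]
  ring

lemma psiF_ge {s : ℝ} (h1 : sstar ≤ s) (h2 : s ≤ π/2) : π/2 ≤ psiF s := by
  have := psiF_antitone ⟨h1, h2⟩ ⟨le_trans h1 h2, le_refl _⟩ h2
  rw [psiF_pi2] at this
  exact this

lemma lt_sstar_of_psiF_lt {s : ℝ} (h0 : 0 ≤ s) (h1 : s ≤ π/2) (h2 : psiF s < π/2) : s < sstar := by
  by_contra hc
  push_neg at hc
  exact absurd (psiF_ge hc h1) (not_le.mpr h2)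

lemma psiF_uniq {s₁ s₂ : ℝ} (h₁ : s₁ ∈ Ico (0:ℝ) (π/2)) (h₂ : s₂ ∈ Ico (0:ℝ) (π/2))
    (hlt : psiF s₁ < π/2) (heq : psiF s₁ = psiF s₂) : s₁ = s₂ := by
  have k₁ : s₁ < sstar := lt_sstar_of_psiF_lt h₁.1 (le_of_lt h₁.2) hlt
  have k₂ : s₂ < sstar := lt_sstar_of_psiF_lt h₂.1 (le_of_lt h₂.2) (heq ▸ hlt)
  exact psiF_strictMono.injOn ⟨h₁.1, le_of_lt k₁⟩ ⟨h₂.1, le_of_lt k₂⟩ heq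

lemma exists_inv {c : ℝ} (h0 : 0 ≤ c) (h1 : c < π/2) : ∃ s ∈ Ico 0 sstar, psiF s = c := by
  have hss : (0:ℝ) ≤ sstar := by linarith [sstar_mem.1, Real.pi_pos]
  have h2 := intermediate_value_Icc hss contDiff_psiF.continuous.continuousOn
  have hc : c ∈ Icc (psiF 0) (psiF sstar) := by
    constructor
    · simpa [psiF] using h0
    · exact le_trans (le_of_lt h1) (psiF_ge (le_refl _) (le_of_lt sstar_mem.2))
  obtain ⟨s, hs, hseq⟩ := h2 hc
  refine ⟨s, ⟨hs.1, ?_⟩, hseq⟩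
  rcases lt_or_eq_of_le hs.2 with h | h
  · exact h
  · exfalso
    rw [h] at hseq
    have := psiF_ge (le_refl sstar) (le_of_lt sstar_mem.2)
    linarith

/-- The inverse of `ψ` on `[0, s*)`. -/
noncomputable def Sinv : ℝ → ℝ := Function.invFunOn psiF (Ico 0 sstar)

lemma Sinv_spec {c : ℝ} (h0 : 0 ≤ c) (h1 : c < π/2) :
    Sinv c ∈ Ico 0 sstar ∧ psiF (Sinv c) = c :=
  Function.invFunOn_pos (exists_inv h0 h1)

lemma psiF_nonneg {x : ℝ} (h0 : 0 ≤ x) (h1 : x ≤ π/2) : 0 ≤ psiF x := by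
  unfold psiF
  have : 0 ≤ Real.sin (2*x) :=
    Real.sin_nonneg_of_nonneg_of_le_pi (by linarith) (by linarith)
  nlinarith

lemma Sinv_hasStrictDerivAt {c : ℝ} (h0 : 0 < c) (h1 : c < π/2) :
    HasStrictDerivAt Sinv (psiD (Sinv c))⁻¹ c := by
  obtain ⟨hmem, heq⟩ := Sinv_spec (le_of_lt h0) h1
  set s₀ := Sinv c with hs₀
  have hsd : 0 < psiD s₀ := psiD_pos hmem.1 hmem.2
  have hs₀pos : 0 < s₀ := by
    rcases lt_or_eq_of_le hmem.1 with h | h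
    · exact h
    · exfalso
      rw [← h] at heq
      simp [psiF] at heq
      linarith
  have hev : ∀ᶠ x in nhds s₀, Sinv (psiF x) = x := by
    have hUopen : IsOpen (Ioo (0:ℝ) sstar ∩ {x | psiF x < π/2}) :=
      isOpen_Ioo.inter (isOpen_lt contDiff_psiF.continuous continuous_const)
    have hUmem : s₀ ∈ Ioo (0:ℝ) sstar ∩ {x | psiF x < π/2} :=
      ⟨⟨hs₀pos, hmem.2⟩, by rw [Set.mem_setOf_eq, heq]; exact h1⟩
    filter_upwards [hUopen.mem_nhds hUmem] with x hx
    have hx2 : x < π/2 := lt_trans hx.1.2 sstar_mem.2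
    have hpx0 : 0 ≤ psiF x := psiF_nonneg (le_of_lt hx.1.1) (le_of_lt hx2)
    obtain ⟨hmem', heq'⟩ := Sinv_spec hpx0 hx.2
    exact psiF_uniq ⟨hmem'.1, lt_trans hmem'.2 sstar_mem.2⟩
      ⟨le_of_lt hx.1.1, hx2⟩ (by rw [heq']; exact hx.2) heq'
  have := (hasStrictDerivAt_psiF s₀).to_local_left_inverse (ne_of_gt hsd) hev
  rwa [heq] at this

lemma one_le_h (ξ : ℝ) : 1 ≤ h ξ := by
  unfold h
  nlinarith [Real.abs_cos_le_one ξ, Real.abs_sin_le_one ξ, abs_nonneg (Real.cos ξ),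
    abs_nonneg (Real.sin ξ), sq_abs (Real.cos ξ), sq_abs (Real.sin ξ),
    Real.sin_sq_add_cos_sq ξ]

lemma h_eq_of_mem {s : ℝ} (h0 : 0 ≤ s) (h1 : s ≤ π/2) : h s = Real.cos s + Real.sin s := by
  unfold h
  rw [abs_of_nonneg (Real.cos_nonneg_of_mem_Icc ⟨by linarith [Real.pi_pos], h1⟩),
    abs_of_nonneg (Real.sin_nonneg_of_nonneg_of_le_pi h0 (by linarith [Real.pi_pos]))]

lemma one_le_w {s : ℝ} (h0 : 0 ≤ s) (h1 : s ≤ π/2) : 1 ≤ Real.cos s + Real.sin s := by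
  rw [← h_eq_of_mem h0 h1]; exact one_le_h s

lemma w_sq {s : ℝ} : (Real.cos s + Real.sin s)^2 = 1 + Real.sin (2*s) := by
  rw [Real.sin_two_mul]
  nlinarith [Real.sin_sq_add_cos_sq s]

/-- The solution function. -/
noncomputable def yfun (lam τ : ℝ) : ℝ :=
  lam / (Real.cos (Sinv (2*lam^2*τ)) + Real.sin (Sinv (2*lam^2*τ)))

lemma c_mem {lam τ : ℝ} (hlam : 0 < lam) (hτ : τ ∈ Ico 0 (π / (4 * lam ^ 2))) :
    0 ≤ 2*lam^2*τ ∧ 2*lam^2*τ < π/2 := by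
  have hl2 : 0 < lam^2 := by positivity
  constructor
  · nlinarith [hτ.1]
  · have h2 := mul_lt_mul_of_pos_left hτ.2 (show (0:ℝ) < 2*lam^2 by positivity)
    have h3 : 2*lam^2 * (π/(4*lam^2)) = π/2 := by field_simp; ring
    linarith [h2, h3.le, h3.ge]

lemma key {lam τ : ℝ} (hlam : 0 < lam) (hτ : τ ∈ Ico 0 (π / (4 * lam ^ 2))) :
    (0 ≤ yfun lam τ ∧ yfun lam τ * h (2 * τ * (yfun lam τ) ^ 2) = lam) ∧
    ∀ y' : ℝ, 0 ≤ y' → y' * h (2 * τ * y' ^ 2) = lam → y' = yfun lam τ := by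
  obtain ⟨hc0, hc1⟩ := c_mem hlam hτ
  obtain ⟨hmem, heq⟩ := Sinv_spec hc0 hc1
  set s := Sinv (2*lam^2*τ) with hs
  have hs0 : 0 ≤ s := hmem.1
  have hs2 : s < π/2 := lt_trans hmem.2 sstar_mem.2
  set w := Real.cos s + Real.sin s with hw
  have hw1 : 1 ≤ w := one_le_w hs0 (le_of_lt hs2)
  have hw0 : 0 < w := lt_of_lt_of_le one_pos hw1
  have hwsq : w^2 = 1 + Real.sin (2*s) := w_sq
  have h1s : 0 < 1 + Real.sin (2*s) := by nlinarith
  have hy : yfun lam τ = lam / w := rfl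
  have hpsi : s * (1 + Real.sin (2*s)) = 2*lam^2*τ := heq
  have harg : 2 * τ * (yfun lam τ)^2 = s := by
    rw [hy, div_pow, hwsq]
    field_simp
    nlinarith [hpsi]
  have hval : yfun lam τ * h (2 * τ * (yfun lam τ)^2) = lam := by
    rw [harg, h_eq_of_mem hs0 (le_of_lt hs2), ← hw, hy]
    field_simp
  refine ⟨⟨by rw [hy]; positivity, hval⟩, ?_⟩
  intro y' hy'0 hy'
  have hh1 : 1 ≤ h (2*τ*y'^2) := one_le_h _
  have hy'pos : 0 < y' := by
    rcases lt_or_eq_of_le hy'0 with h | h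
    · exact h
    · exfalso; rw [← h] at hy'; simp at hy'; linarith
  have hy'lam : y' ≤ lam := by nlinarith
  have hs'0 : 0 ≤ 2*τ*y'^2 := by nlinarith [hτ.1]
  have hsql : y'^2 ≤ lam^2 := by nlinarith
  have hs'le : 2*τ*y'^2 ≤ 2*lam^2*τ := by nlinarith [mul_le_mul_of_nonneg_left hsql hτ.1]
  have hs'2 : 2*τ*y'^2 < π/2 := lt_of_le_of_lt hs'le hc1
  set s' := 2*τ*y'^2 with hs'
  set W := Real.cos s' + Real.sin s' with hW
  have hW1 : 1 ≤ W := one_le_w hs'0 (le_of_lt hs'2)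
  have hW0 : 0 < W := lt_of_lt_of_le one_pos hW1
  have hWsq : W^2 = 1 + Real.sin (2*s') := w_sq
  have hy'W : y' * W = lam := by
    rw [← hy']
    congr 1
    exact (h_eq_of_mem hs'0 (le_of_lt hs'2)).symm
  have hpsi' : psiF s' = 2*lam^2*τ := by
    show s' * (1 + Real.sin (2*s')) = 2*lam^2*τ
    rw [← hWsq]
    calc s' * W^2 = 2*τ*(y'*W)^2 := by rw [hs']; ring
    _ = 2*τ*lam^2 := by rw [hy'W]
    _ = 2*lam^2*τ := by ring
  have hss' : s = s' :=
    psiF_uniq ⟨hs0, hs2⟩ ⟨hs'0, hs'2⟩ (by rw [heq]; exact hc1)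
      (by rw [heq, hpsi'])
  have : y' * W = yfun lam τ * w := by
    rw [hy'W, hy]; field_simp
  rw [hy]
  have hWw : W = w := by rw [hW, hw, hss']
  rw [eq_div_iff (ne_of_gt hw0), ← hWw, hy'W]

lemma yfun_contDiffOn {lam : ℝ} (hlam : 0 < lam) :
    ContDiffOn ℝ 1 (yfun lam) (Ioo 0 (π / (4 * lam ^ 2))) := by
  set T := π / (4 * lam ^ 2) with hT
  set D : ℝ → ℝ := fun τ =>
    (0 * (Real.cos (Sinv (2*lam^2*τ)) + Real.sin (Sinv (2*lam^2*τ))) -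
      lam * (-Real.sin (Sinv (2*lam^2*τ)) * ((psiD (Sinv (2*lam^2*τ)))⁻¹ * (2*lam^2)) +
        Real.cos (Sinv (2*lam^2*τ)) * ((psiD (Sinv (2*lam^2*τ)))⁻¹ * (2*lam^2)))) /
      (Real.cos (Sinv (2*lam^2*τ)) + Real.sin (Sinv (2*lam^2*τ)))^2 with hD
  have hcfacts : ∀ τ₀ ∈ Ioo (0:ℝ) T, 0 < 2*lam^2*τ₀ ∧ 2*lam^2*τ₀ < π/2 := by
    intro τ₀ hτ₀
    have := c_mem hlam (⟨le_of_lt hτ₀.1, hτ₀.2⟩ : τ₀ ∈ Ico 0 T)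
    exact ⟨mul_pos (by positivity) hτ₀.1, this.2⟩
  have hwpos : ∀ τ₀ ∈ Ioo (0:ℝ) T,
      0 < Real.cos (Sinv (2*lam^2*τ₀)) + Real.sin (Sinv (2*lam^2*τ₀)) := by
    intro τ₀ hτ₀
    obtain ⟨hc0, hc1⟩ := hcfacts τ₀ hτ₀
    obtain ⟨hmem, -⟩ := Sinv_spec (le_of_lt hc0) hc1
    have := one_le_w hmem.1 (le_of_lt (lt_trans hmem.2 sstar_mem.2))
    linarith
  have hder : ∀ τ₀ ∈ Ioo (0:ℝ) T, HasDerivAt (yfun lam) (D τ₀) τ₀ := by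
    intro τ₀ hτ₀
    obtain ⟨hc0, hc1⟩ := hcfacts τ₀ hτ₀
    have hS := Sinv_hasStrictDerivAt hc0 hc1
    have hk : HasDerivAt (fun τ : ℝ => 2*lam^2*τ) (2*lam^2) τ₀ := by
      simpa using (hasDerivAt_id τ₀).const_mul (2*lam^2)
    have hSk : HasDerivAt (fun τ : ℝ => Sinv (2*lam^2*τ))
        ((psiD (Sinv (2*lam^2*τ₀)))⁻¹ * (2*lam^2)) τ₀ := hS.hasDerivAt.comp τ₀ hk
    have hcos : HasDerivAt (fun τ : ℝ => Real.cos (Sinv (2*lam^2*τ)))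
        (-Real.sin (Sinv (2*lam^2*τ₀)) * ((psiD (Sinv (2*lam^2*τ₀)))⁻¹ * (2*lam^2))) τ₀ :=
      hSk.cos
    have hsin : HasDerivAt (fun τ : ℝ => Real.sin (Sinv (2*lam^2*τ)))
        (Real.cos (Sinv (2*lam^2*τ₀)) * ((psiD (Sinv (2*lam^2*τ₀)))⁻¹ * (2*lam^2))) τ₀ :=
      hSk.sin
    exact (hasDerivAt_const τ₀ lam).div (hcos.add hsin) (ne_of_gt (hwpos τ₀ hτ₀))
  have hScont : ContinuousOn (fun τ : ℝ => Sinv (2*lam^2*τ)) (Ioo 0 T) := by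
    intro τ₀ hτ₀
    obtain ⟨hc0, hc1⟩ := hcfacts τ₀ hτ₀
    exact (((Sinv_hasStrictDerivAt hc0 hc1).hasDerivAt.continuousAt).comp
      (by fun_prop : ContinuousAt (fun τ : ℝ => 2*lam^2*τ) τ₀)).continuousWithinAt
  have hcosc : ContinuousOn (fun τ : ℝ => Real.cos (Sinv (2*lam^2*τ))) (Ioo 0 T) :=
    Real.continuous_cos.comp_continuousOn hScont
  have hsinc : ContinuousOn (fun τ : ℝ => Real.sin (Sinv (2*lam^2*τ))) (Ioo 0 T) :=
    Real.continuous_sin.comp_continuousOn hScont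
  have hpsiDc : ContinuousOn (fun τ : ℝ => (psiD (Sinv (2*lam^2*τ)))⁻¹) (Ioo 0 T) := by
    apply ContinuousOn.inv₀ (continuous_psiD.comp_continuousOn hScont)
    intro τ₀ hτ₀
    obtain ⟨hc0, hc1⟩ := hcfacts τ₀ hτ₀
    obtain ⟨hmem, -⟩ := Sinv_spec (le_of_lt hc0) hc1
    exact ne_of_gt (psiD_pos hmem.1 hmem.2)
  have hDcont : ContinuousOn D (Ioo 0 T) := by
    apply ContinuousOn.div
    · exact (continuousOn_const.mul (hcosc.add hsinc)).sub
        (continuousOn_const.mul (((hsinc.neg.mul (hpsiDc.mul continuousOn_const))).add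
          (hcosc.mul (hpsiDc.mul continuousOn_const))))
    · exact (hcosc.add hsinc).pow 2
    · intro τ₀ hτ₀
      exact pow_ne_zero 2 (ne_of_gt (hwpos τ₀ hτ₀))
  rw [show (1 : WithTop ℕ∞) = 0 + 1 by norm_num,
    contDiffOn_succ_iff_deriv_of_isOpen isOpen_Ioo]
  refine ⟨fun τ hτ => ((hder τ hτ).differentiableAt).differentiableWithinAt, ?_, ?_⟩
  · intro hcon; exact absurd hcon (by simp)
  · rw [contDiffOn_zero]
    exact hDcont.congr fun τ hτ => (hder τ hτ).deriv

/-- Before the first birth time `π/(4λ²)`, the implicit equation `y · h(2τy²) = λ` has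
exactly one nonnegative solution `y(τ)`, and `τ ↦ y(τ)` is `C¹` on `(0, π/(4λ²))`. -/
theorem implicit_solution_unique_C1 (lam : ℝ) (hlam : 0 < lam) :
    ∃ y : ℝ → ℝ,
      (∀ τ ∈ Set.Ico (0 : ℝ) (π / (4 * lam ^ 2)),
        (0 ≤ y τ ∧ y τ * h (2 * τ * (y τ) ^ 2) = lam) ∧
        ∀ y' : ℝ, 0 ≤ y' → y' * h (2 * τ * y' ^ 2) = lam → y' = y τ) ∧
      ContDiffOn ℝ 1 y (Set.Ioo (0 : ℝ) (π / (4 * lam ^ 2))) := by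
  exact ⟨yfun lam, fun τ hτ => key hlam hτ, yfun_contDiffOn hlam⟩
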